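/- Let P and Q be nonzero integers with D = P^2 - 4Q ≠ 0, let U = U(P,Q) be nondegenerate, and let p be an odd prime with p ∤ D and p ∤ gcd(P,Q). Then for every integer k ≥ 1 one has M^U_{p^k} ≡ (D/p) (mod p^k); that is, there exists an integer t such that M^U_{p^k} = (D/p) + p^k·t, where (D/p) is the Legendre symbol. -/

import Mathlib

/-- Lucas sequence of the first kind: `U 0 = 0`, `U 1 = 1`,
`U (n+2) = P * U (n+1) - Q * U n`. -/
def lucasU (P Q : ℤ) : ℕ → ℤ
  | 0 => 0
  | 1 => 1
  | n + 2 => P * lucasU P Q (n + 1) - Q * lucasU P Q n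

/-- Möbius dual of the Lucas sequence of the first kind:
`M^U_n = ∏_{d ∣ n} U_d ^ μ(n/d)`, as a rational number. -/
def mobiusDualU (P Q : ℤ) (n : ℕ) : ℚ :=
  ∏ d ∈ n.divisors, (lucasU P Q d : ℚ) ^ (ArithmeticFunction.moebius (n / d))

lemma lucasU_add (P Q : ℤ) (m : ℕ) : ∀ n, lucasU P Q (m + n + 1)
    = lucasU P Q (m+1) * lucasU P Q (n+1) - Q * lucasU P Q m * lucasU P Q n := by
  intro n
  induction n using Nat.twoStepInduction generalizing m with
  | zero => simp [lucasU]
  | one => show lucasU P Q (m + 2) = _; simp [lucasU]; ring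
  | more n ih2 ih1 =>
      have h1 := ih1 m
      have h2 := ih2 m
      rw [show m + (n+2) + 1 = (m + n + 1) + 2 from by ring]
      show P * lucasU P Q (m + n + 1 + 1) - Q * lucasU P Q (m + n + 1) = _
      rw [show m + n + 1 + 1 = m + (n + 1) + 1 from by ring, h1, h2]
      show _ = _ * (P * lucasU P Q (n+2) - Q * lucasU P Q (n+1)) - _
      rw [show lucasU P Q (n+2) = P * lucasU P Q (n+1) - Q * lucasU P Q n from rfl]
      ring

lemma lucasU_dvd (P Q : ℤ) (m n : ℕ) : lucasU P Q (m+1) ∣ lucasU P Q ((m+1) * n) := by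
  induction n with
  | zero => simp [lucasU]
  | succ n ih =>
      have : (m+1) * (n+1) = (m+1)*n + m + 1 := by ring
      rw [this, lucasU_add]
      exact dvd_sub (Dvd.dvd.mul_left dvd_rfl _) ((ih.mul_left _).mul_right _)

lemma pow_sub_pow_im (P Q : ℤ) : ∀ n : ℕ,
    (((⟨P,1⟩ : ℤ√(P^2-4*Q)) ^ n) - ((⟨P,-1⟩ : ℤ√(P^2-4*Q)) ^ n)).im
      = 2 ^ n * lucasU P Q n := by
  have key : ∀ (x : ℤ√(P^2-4*Q)), x = ⟨P,1⟩ ∨ x = ⟨P,-1⟩ → ∀ n,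
      x ^ (n+2) = ((2*P : ℤ) : ℤ√(P^2-4*Q)) * x ^ (n+1)
        - ((4*Q : ℤ) : ℤ√(P^2-4*Q)) * x ^ n := by
    intro x hx n
    have hsq : x ^ 2 = ((2*P : ℤ) : ℤ√(P^2-4*Q)) * x - ((4*Q : ℤ) : ℤ√(P^2-4*Q)) := by
      rcases hx with rfl | rfl <;>
      · ext <;> simp [pow_two, Zsqrtd.re_mul, Zsqrtd.im_mul] <;> ring
    calc x ^ (n+2) = x ^ n * x ^ 2 := by ring
    _ = _ := by rw [hsq]; ring
  intro n
  induction n using Nat.twoStepInduction with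
  | zero => simp [lucasU]
  | one => simp [lucasU, Zsqrtd.ext_iff]
  | more n ih2 ih1 =>
      rw [key _ (Or.inl rfl) n, key _ (Or.inr rfl) n]
      have : (((2*P : ℤ) : ℤ√(P^2-4*Q)) * (⟨P,1⟩:ℤ√(P^2-4*Q)) ^ (n+1)
          - ((4*Q : ℤ) : ℤ√(P^2-4*Q)) * (⟨P,1⟩:ℤ√(P^2-4*Q)) ^ n
          - (((2*P : ℤ) : ℤ√(P^2-4*Q)) * (⟨P,-1⟩:ℤ√(P^2-4*Q)) ^ (n+1)
          - ((4*Q : ℤ) : ℤ√(P^2-4*Q)) * (⟨P,-1⟩:ℤ√(P^2-4*Q)) ^ n))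
          = ((2*P : ℤ) : ℤ√(P^2-4*Q)) * ((⟨P,1⟩:ℤ√(P^2-4*Q)) ^ (n+1) - (⟨P,-1⟩:ℤ√(P^2-4*Q)) ^ (n+1))
            - ((4*Q : ℤ) : ℤ√(P^2-4*Q)) * ((⟨P,1⟩:ℤ√(P^2-4*Q)) ^ n - (⟨P,-1⟩:ℤ√(P^2-4*Q)) ^ n) := by
        ring
      rw [this, Zsqrtd.im_sub, Zsqrtd.im_smul, Zsqrtd.im_smul, ih1, ih2]
      rw [show lucasU P Q (n+2) = P * lucasU P Q (n+1) - Q * lucasU P Q n from rfl]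
      ring

set_option synthInstance.maxHeartbeats 1000000 in
lemma frob_zsqrtd (P Q : ℤ) (p : ℕ) [hp : Fact p.Prime] (hodd : Odd p) :
    ((p : ℤ√(P^2-4*Q)) ∣ (⟨P,1⟩ : ℤ√(P^2-4*Q)) ^ p
      - ⟨P, legendreSym p (P^2-4*Q)⟩) := by
  set D : ℤ := P^2-4*Q with hD
  set I : Ideal (ℤ√D) := Ideal.span {(p : ℤ√D)} with hI
  have memI : ∀ x : ℤ√D, x ∈ I ↔ (p : ℤ√D) ∣ x := fun x => Ideal.mem_span_singleton
  haveI : CharP (ℤ√D ⧸ I) p := by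
    constructor
    intro a
    rw [← map_natCast (Ideal.Quotient.mk I) a, Ideal.Quotient.eq_zero_iff_mem, memI]
    rw [show ((a : ℕ) : ℤ√D) = ((a : ℤ) : ℤ√D) by push_cast; ring,
        show ((p : ℕ) : ℤ√D) = ((p : ℤ) : ℤ√D) by push_cast; ring,
        Zsqrtd.intCast_dvd_intCast]
    exact Int.natCast_dvd_natCast
  have hcong : ∀ x y : ℤ, (p : ℤ) ∣ x - y →
      Ideal.Quotient.mk I ((x : ℤ√D)) = Ideal.Quotient.mk I ((y : ℤ√D)) := by
    intro x y h
    rw [Ideal.Quotient.mk_eq_mk_iff_sub_mem, memI,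
        show ((x : ℤ√D)) - ((y : ℤ√D)) = (((x - y : ℤ)) : ℤ√D) by push_cast; ring,
        show ((p : ℕ) : ℤ√D) = ((p : ℤ) : ℤ√D) by push_cast; ring,
        Zsqrtd.intCast_dvd_intCast]
    exact h
  have split : (⟨P,1⟩ : ℤ√D) = (P : ℤ√D) + ⟨0,1⟩ := by
    ext <;> simp
  have splitc : (⟨P, legendreSym p D⟩ : ℤ√D)
      = (P : ℤ√D) + ((legendreSym p D : ℤ) : ℤ√D) * ⟨0,1⟩ := by
    ext <;> simp [Zsqrtd.re_mul, Zsqrtd.im_mul]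
  have hs2 : (⟨0,1⟩ : ℤ√D) ^ 2 = (D : ℤ√D) := by
    ext <;> simp [pow_two, Zsqrtd.re_mul, Zsqrtd.im_mul]
  have hsp : (⟨0,1⟩ : ℤ√D) ^ p = ((D ^ (p/2) : ℤ) : ℤ√D) * ⟨0,1⟩ := by
    have hq : p = 2 * (p/2) + 1 := by
      have := Nat.odd_iff.mp hodd; omega
    conv_lhs => rw [hq]
    rw [pow_succ, pow_mul, hs2]; push_cast; ring
  have fermat : ∀ x : ℤ, (p : ℤ) ∣ x ^ p - x := by
    intro x
    have := ZMod.pow_card (x : ZMod p)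
    rwa [← sub_eq_zero, ← Int.cast_pow, ← Int.cast_sub,
      ZMod.intCast_zmod_eq_zero_iff_dvd] at this
  have euler : (p : ℤ) ∣ D ^ (p/2) - legendreSym p D := by
    have := (legendreSym.eq_pow p D).symm
    rwa [← Int.cast_pow, ← sub_eq_zero, ← Int.cast_sub,
      ZMod.intCast_zmod_eq_zero_iff_dvd] at this
  have main : Ideal.Quotient.mk I ((⟨P,1⟩ : ℤ√D) ^ p)
      = Ideal.Quotient.mk I (⟨P, legendreSym p D⟩ : ℤ√D) := by
    rw [split, splitc, map_pow, map_add, add_pow_char, map_add, map_mul,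
      ← map_pow, ← map_pow, hsp, map_mul,
      show ((P : ℤ√D) ^ p) = (((P ^ p : ℤ)) : ℤ√D) by push_cast; ring,
      hcong _ _ (fermat P), hcong _ _ euler]
  rw [← memI, ← Ideal.Quotient.mk_eq_mk_iff_sub_mem]
  exact main

lemma key_dvd (P Q : ℤ) (p : ℕ) [hp : Fact p.Prime] (hodd : Odd p)
    (hpD : ¬ (p : ℤ) ∣ (P^2-4*Q)) (j : ℕ) :
    (p : ℤ)^(j+1) ∣ lucasU P Q (p^(j+1))
      - legendreSym p (P^2-4*Q) * lucasU P Q (p^j) := by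
  set D : ℤ := P^2-4*Q with hD
  set ε : ℤ := legendreSym p D with hε
  set a : ℤ√D := ⟨P,1⟩ with ha
  set b : ℤ√D := ⟨P,-1⟩ with hb
  have hDz : ((D : ℤ) : ZMod p) ≠ 0 := by
    rw [Ne, ZMod.intCast_zmod_eq_zero_iff_dvd]; exact hpD
  have hεpm : ε = 1 ∨ ε = -1 := legendreSym.eq_one_or_neg_one p hDz
  have froba : (p : ℤ√D) ∣ a ^ p - ⟨P, ε⟩ := frob_zsqrtd P Q p hodd
  have frobb : (p : ℤ√D) ∣ b ^ p - ⟨P, -ε⟩ := by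
    obtain ⟨z, hz⟩ := froba
    refine ⟨star z, ?_⟩
    have h2 : star (a ^ p - (⟨P,ε⟩ : ℤ√D)) = b ^ p - ⟨P,-ε⟩ := by
      rw [star_sub, star_pow, ha, hb, Zsqrtd.star_mk, Zsqrtd.star_mk]
    have h3 : star ((p : ℤ√D) * z) = (p : ℤ√D) * star z := by
      rw [star_mul', star_natCast]
    rw [← h3, ← hz, h2]
  -- lifted congruence in ℤ√D
  have main : (p : ℤ√D)^(j+1) ∣ (a^(p^(j+1)) - b^(p^(j+1)))
      - ((ε : ℤ) : ℤ√D) * (a^(p^j) - b^(p^j)) := by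
    rcases hεpm with h1 | h1
    · have ba : (p : ℤ√D) ∣ a ^ p - a := by
        rw [h1] at froba
        exact froba
      have bb : (p : ℤ√D) ∣ b ^ p - b := by
        rw [h1] at frobb
        simpa using frobb
      have l1 := dvd_sub_pow_of_dvd_sub ba j
      have l2 := dvd_sub_pow_of_dvd_sub bb j
      rw [← pow_mul, ← pow_succ'] at l1 l2
      have e : (a^(p^(j+1)) - a^(p^j)) - (b^(p^(j+1)) - b^(p^j))
          = (a^(p^(j+1)) - b^(p^(j+1))) - ((ε : ℤ) : ℤ√D) * (a^(p^j) - b^(p^j)) := by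
        rw [h1]; push_cast; ring
      rw [← e]
      exact dvd_sub l1 l2
    · have ba : (p : ℤ√D) ∣ a ^ p - b := by
        rw [h1] at froba
        exact froba
      have bb : (p : ℤ√D) ∣ b ^ p - a := by
        rw [h1] at frobb
        simpa using frobb
      have l1 := dvd_sub_pow_of_dvd_sub ba j
      have l2 := dvd_sub_pow_of_dvd_sub bb j
      rw [← pow_mul, ← pow_succ'] at l1 l2
      have e : (a^(p^(j+1)) - b^(p^j)) - (b^(p^(j+1)) - a^(p^j))
          = (a^(p^(j+1)) - b^(p^(j+1))) - ((ε : ℤ) : ℤ√D) * (a^(p^j) - b^(p^j)) := by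
        rw [h1]; push_cast; ring
      rw [← e]
      exact dvd_sub l1 l2
  -- extract the imaginary part
  have hcast : (((p : ℤ)^(j+1) : ℤ) : ℤ√D) = (p : ℤ√D)^(j+1) := by push_cast; ring
  rw [← hcast] at main
  have him := ((Zsqrtd.intCast_dvd _ _).mp main).2
  rw [Zsqrtd.im_sub, Zsqrtd.im_sub, Zsqrtd.im_smul, Zsqrtd.im_sub] at him
  have ia := pow_sub_pow_im P Q (p^(j+1))
  have ib := pow_sub_pow_im P Q (p^j)
  rw [Zsqrtd.im_sub] at ia ib
  rw [ia, ib] at him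
  -- him : p^(j+1) ∣ 2^(p^(j+1)) * U(p^(j+1)) - ε * (2^(p^j) * U(p^j))
  have htwo : (p : ℤ)^(j+1) ∣ (2:ℤ)^(p^(j+1)) - 2^(p^j) := by
    have base : (p : ℤ) ∣ (2:ℤ)^p - 2 := by
      have := ZMod.pow_card (2 : ZMod p)
      rwa [← sub_eq_zero, show ((2:ZMod p)) = ((2:ℤ) : ZMod p) by push_cast; ring,
        ← Int.cast_pow, ← Int.cast_sub, ZMod.intCast_zmod_eq_zero_iff_dvd] at this
    have := dvd_sub_pow_of_dvd_sub base j
    rwa [← pow_mul, ← pow_succ'] at this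
  have comb : (p : ℤ)^(j+1) ∣ 2^(p^j) *
      (lucasU P Q (p^(j+1)) - ε * lucasU P Q (p^j)) := by
    have e : (2:ℤ)^(p^j) * (lucasU P Q (p^(j+1)) - ε * lucasU P Q (p^j))
        = (2^(p^(j+1)) * lucasU P Q (p^(j+1)) - ε * (2^(p^j) * lucasU P Q (p^j)))
          - ((2:ℤ)^(p^(j+1)) - 2^(p^j)) * lucasU P Q (p^(j+1)) := by ring
    rw [e]
    exact dvd_sub him (htwo.mul_right _)
  have hcop : IsCoprime ((p : ℤ)^(j+1)) ((2:ℤ)^(p^j)) := by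
    refine IsCoprime.pow ?_
    rw [show ((2:ℤ)) = ((2:ℕ):ℤ) by norm_num, Nat.isCoprime_iff_coprime]
    exact (Nat.Prime.coprime_iff_not_dvd hp.out).mpr (fun h => by
      have := (Nat.prime_dvd_prime_iff_eq hp.out Nat.prime_two).mp h
      rw [this] at hodd
      exact (Nat.not_odd_iff_even.mpr (even_two)) hodd)
  exact hcop.dvd_of_dvd_mul_left comb

lemma not_dvd_lucasU (P Q : ℤ) (p : ℕ) [hp : Fact p.Prime] (hodd : Odd p)
    (hpD : ¬ (p : ℤ) ∣ (P^2-4*Q)) (j : ℕ) :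
    ¬ (p : ℤ) ∣ lucasU P Q (p^j) := by
  induction j with
  | zero =>
      simp [lucasU]
      intro h
      have := Int.le_of_dvd one_pos h
      have := hp.out.two_le
      omega
  | succ j ih =>
      intro hdvd
      have hkey := key_dvd P Q p hodd hpD j
      have hp1 : (p:ℤ) ∣ (p:ℤ)^(j+1) := dvd_pow_self _ (Nat.succ_ne_zero j)
      have h2 : (p:ℤ) ∣ legendreSym p (P^2-4*Q) * lucasU P Q (p^j) := by
        have := dvd_sub hdvd (hp1.trans hkey)
        simpa using this
      have hDz : ((P^2-4*Q : ℤ) : ZMod p) ≠ 0 := by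
        rw [Ne, ZMod.intCast_zmod_eq_zero_iff_dvd]; exact hpD
      rcases legendreSym.eq_one_or_neg_one p hDz with h1 | h1 <;>
        rw [h1] at h2 <;> simp at h2 <;> exact ih h2

theorem stmt_3 (P Q : ℤ) (hP : P ≠ 0) (hQ : Q ≠ 0) (hD : P ^ 2 - 4 * Q ≠ 0)
    (hnd : ∀ m : ℕ, 1 ≤ m → lucasU P Q m ≠ 0)
    (p : ℕ) (hp : p.Prime) (hodd : Odd p) (hpD : ¬ (p : ℤ) ∣ (P ^ 2 - 4 * Q))
    (hpPQ : ¬ p ∣ Int.gcd P Q)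
    (k : ℕ) (hk : 1 ≤ k) :
    ∃ t : ℤ, mobiusDualU P Q (p ^ k)
      = (jacobiSym (P ^ 2 - 4 * Q) p : ℚ) + (p : ℚ) ^ k * (t : ℚ) := by
  haveI : Fact p.Prime := ⟨hp⟩
  obtain ⟨j, rfl⟩ : ∃ j, k = j + 1 := ⟨k - 1, (Nat.succ_pred_eq_of_pos hk).symm⟩
  set ε : ℤ := legendreSym p (P^2-4*Q) with hε
  have hjac : jacobiSym (P ^ 2 - 4 * Q) p = ε := (jacobiSym.legendreSym.to_jacobiSym p _).symm
  set x : ℤ := lucasU P Q (p^j) with hx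
  set y : ℤ := lucasU P Q (p^(j+1)) with hy
  have hxndvd : ¬ (p : ℤ) ∣ x := not_dvd_lucasU P Q p hodd hpD j
  have hx0 : x ≠ 0 := fun h => hxndvd (h ▸ dvd_zero _)
  have hdvd : x ∣ y := by
    obtain ⟨m, hm⟩ : ∃ m, p^j = m + 1 :=
      ⟨p^j - 1, (Nat.succ_pred_eq_of_pos (Nat.pow_pos (n := j) hp.pos)).symm⟩
    have := lucasU_dvd P Q m p
    rw [← hm] at this
    rwa [hx, hy, pow_succ]
  have hcong : (p : ℤ)^(j+1) ∣ y - ε * x := key_dvd P Q p hodd hpD j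
  have hxdvd2 : x ∣ y - ε * x := dvd_sub hdvd (Dvd.dvd.mul_left dvd_rfl ε)
  have hcop : IsCoprime ((p : ℤ)^(j+1)) x :=
    ((Nat.prime_iff_prime_int.mp hp).coprime_iff_not_dvd.mpr hxndvd).pow_left
  obtain ⟨t, ht⟩ : (p : ℤ)^(j+1) * x ∣ y - ε * x := hcop.mul_dvd hcong hxdvd2
  refine ⟨t, ?_⟩
  -- compute the Möbius dual
  have hmd : mobiusDualU P Q (p^(j+1)) = (y : ℚ) / (x : ℚ) := by
    rw [mobiusDualU, Nat.prod_divisors_prime_pow hp]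
    rw [Finset.prod_range_succ, Finset.prod_range_succ]
    have hrest : ∀ i ∈ Finset.range j,
        ((lucasU P Q (p^i) : ℚ)) ^ (ArithmeticFunction.moebius (p^(j+1) / p^i)) = 1 := by
      intro i hi
      have hij : i ≤ j + 1 := by
        have := Finset.mem_range.mp hi; omega
      rw [Nat.pow_div hij hp.pos, ArithmeticFunction.moebius_apply_prime_pow hp
        (by have := Finset.mem_range.mp hi; omega), if_neg
        (by have := Finset.mem_range.mp hi; omega), zpow_zero]
    rw [Finset.prod_congr rfl hrest, Finset.prod_const_one, one_mul]
    rw [Nat.pow_div (by omega) hp.pos, Nat.pow_div (by omega) hp.pos]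
    rw [show j + 1 - j = 1 by omega, show j + 1 - (j+1) = 0 by omega]
    rw [pow_one, pow_zero, ArithmeticFunction.moebius_apply_prime hp,
      ArithmeticFunction.moebius_apply_one]
    rw [zpow_neg_one, zpow_one]
    rw [div_eq_inv_mul]
  rw [hmd, hjac]
  have hyx : (y : ℚ) = ε * x + (p : ℚ)^(j+1) * x * t := by
    have : y = ε * x + (p : ℤ)^(j+1) * x * t := by linarith [ht]
    rw [this]; push_cast; ring
  rw [hyx]
  field_simp
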